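/- Let γ ∈ (1/3,1/2], H a Hilbert space with interpolation scale H_α and selfadjoint semigroup S_t = e^{Lt}. Let (Y,Y') satisfy the controlled condition Y_t − S_{t−s}Y_s = S_{t−s}Y'_s X_{t,s} + R^Y_{t,s} in H_{−2γ} with |R^Y_{t,s}|_{H_{−2γ}} ≤ C|t−s|^{2γ}, with Y bounded in H and Y' bounded in (H)^d, and let ψ ∈ H_{2γ}. Then the real-valued pair (⟨Y,ψ⟩, ⟨Y',ψ⟩) is a classically controlled rough path: ⟨Y_t,ψ⟩ − ⟨Y_s,ψ⟩ = ⟨Y'_s,ψ⟩ X_{t,s} + r_{t,s} with |r_{t,s}| ≲ |t−s|^{2γ}. -/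

import Mathlib

open Finset
open scoped RealInnerProductSpace

/-!
STATEMENT 10: If `(Y,Y')` is controlled by `X` according to the selfadjoint semigroup
`S` in `H_{−2γ}`, with `Y` bounded in `H` and `Y'` bounded in `H^d`, and `ψ ∈ H_{2γ}`,
then `(⟨Y,ψ⟩, ⟨Y',ψ⟩)` is a classically controlled rough path:
`⟨Y_t,ψ⟩ − ⟨Y_s,ψ⟩ = ⟨Y'_s,ψ⟩ X_{t,s} + r_{t,s}` with `|r_{t,s}| ≲ |t−s|^{2γ}`.
Model: `H` real Hilbert, `E` normed (= `H_{−2γ}`), `ι : H → E` the embedding, the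
pairing with `ψ` extends to a functional `φ : E → ℝ` with `φ(ι u) = ⟨u, ψ⟩`;
`ψ ∈ H_{2γ}` plus selfadjointness of `S_r` give `‖S_r ψ − ψ‖ ≤ K r^{2γ}`.
-/
theorem pairing_is_controlled
    {H E : Type*} [NormedAddCommGroup H] [InnerProductSpace ℝ H]
    [NormedAddCommGroup E] [NormedSpace ℝ E]
    (d : ℕ) (γ T : ℝ) (hγ1 : 1 / 3 < γ) (hγ2 : γ ≤ 1 / 2) (hT : 0 < T)
    (S : ℝ → H →L[ℝ] H) (ι : H →L[ℝ] E)
    (hself : ∀ r : ℝ, 0 ≤ r → ∀ u v : H, ⟪S r u, v⟫ = ⟪u, S r v⟫)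
    (ψ : H) (φ : E →L[ℝ] ℝ) (hpair : ∀ u : H, φ (ι u) = ⟪u, ψ⟫)
    (K : ℝ) (hK : 0 ≤ K)
    (hψreg : ∀ r : ℝ, 0 ≤ r → r ≤ T → ‖S r ψ - ψ‖ ≤ K * r ^ (2 * γ))
    (X : ℝ → ℝ → Fin d → ℝ) (CX : ℝ) (hCX : 0 ≤ CX)
    (hX : ∀ s t : ℝ, 0 ≤ s → s ≤ t → t ≤ T → ‖X t s‖ ≤ CX * (t - s) ^ γ)
    (Y : ℝ → H) (Y' : ℝ → Fin d → H)
    (MY : ℝ) (hMY : 0 ≤ MY)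
    (hYb : ∀ t : ℝ, 0 ≤ t → t ≤ T → ‖Y t‖ ≤ MY)
    (hY'b : ∀ (t : ℝ) (i : Fin d), 0 ≤ t → t ≤ T → ‖Y' t i‖ ≤ MY)
    (CR : ℝ) (hCR : 0 ≤ CR)
    (hctrl : ∀ s t : ℝ, 0 ≤ s → s ≤ t → t ≤ T →
      ‖ι (Y t) - ι (S (t - s) (Y s)) - ∑ i, X t s i • ι (S (t - s) (Y' s i))‖
        ≤ CR * (t - s) ^ (2 * γ)) :
    ∃ C' : ℝ, 0 ≤ C' ∧ ∀ s t : ℝ, 0 ≤ s → s ≤ t → t ≤ T →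
      |⟪Y t, ψ⟫ - ⟪Y s, ψ⟫ - ∑ i, X t s i * ⟪Y' s i, ψ⟫| ≤ C' * (t - s) ^ (2 * γ) := by
  have hγ0 : 0 < γ := lt_trans (by norm_num) hγ1
  have hTγ : 0 ≤ T ^ γ := Real.rpow_nonneg hT.le γ
  refine ⟨‖φ‖ * CR + MY * K + d * CX * T ^ γ * (MY * K), by positivity, ?_⟩
  intro s t hs hst htT
  set r := t - s with hr
  have hr0 : 0 ≤ r := sub_nonneg.mpr hst
  have hrT : r ≤ T := by simp only [hr]; linarith
  have hr2γ : 0 ≤ r ^ (2 * γ) := Real.rpow_nonneg hr0 _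
  -- algebraic decomposition
  have hw := hψreg r hr0 hrT
  have key : ⟪Y t, ψ⟫ - ⟪Y s, ψ⟫ - ∑ i, X t s i * ⟪Y' s i, ψ⟫
      = φ (ι (Y t) - ι (S r (Y s)) - ∑ i, X t s i • ι (S r (Y' s i)))
        + ⟪Y s, S r ψ - ψ⟫ + ∑ i, X t s i * ⟪Y' s i, S r ψ - ψ⟫ := by
    have h1 : φ (ι (Y t) - ι (S r (Y s)) - ∑ i, X t s i • ι (S r (Y' s i)))
        = ⟪Y t, ψ⟫ - ⟪S r (Y s), ψ⟫ - ∑ i, X t s i * ⟪S r (Y' s i), ψ⟫ := by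
      simp [map_sub, map_sum, map_smul, hpair, smul_eq_mul]
    have h2 : ∀ i, ⟪S r (Y' s i), ψ⟫ = ⟪Y' s i, S r ψ⟫ := fun i => hself r hr0 _ _
    rw [h1, hself r hr0 (Y s) ψ]
    simp only [h2, inner_sub_right, mul_sub, Finset.sum_sub_distrib]
    ring
  rw [key]
  have b1 : |φ (ι (Y t) - ι (S r (Y s)) - ∑ i, X t s i • ι (S r (Y' s i)))|
      ≤ ‖φ‖ * CR * r ^ (2 * γ) := by
    calc |φ _| ≤ ‖φ‖ * ‖ι (Y t) - ι (S r (Y s)) - ∑ i, X t s i • ι (S r (Y' s i))‖ :=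
          φ.le_opNorm _
      _ ≤ ‖φ‖ * (CR * r ^ (2 * γ)) := by
          exact mul_le_mul_of_nonneg_left (hctrl s t hs hst htT) (norm_nonneg φ)
      _ = ‖φ‖ * CR * r ^ (2 * γ) := by ring
  have b2 : |⟪Y s, S r ψ - ψ⟫| ≤ MY * K * r ^ (2 * γ) := by
    calc |⟪Y s, S r ψ - ψ⟫| ≤ ‖Y s‖ * ‖S r ψ - ψ‖ := abs_real_inner_le_norm _ _
      _ ≤ MY * (K * r ^ (2 * γ)) :=
          mul_le_mul (hYb s hs (le_trans hst htT)) hw (norm_nonneg _) hMY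
      _ = MY * K * r ^ (2 * γ) := by ring
  have bX : ∀ i : Fin d, |X t s i| ≤ CX * r ^ γ := by
    intro i
    exact le_trans (norm_le_pi_norm (X t s) i) (hX s t hs hst htT)
  have b3 : |∑ i, X t s i * ⟪Y' s i, S r ψ - ψ⟫|
      ≤ d * CX * T ^ γ * (MY * K) * r ^ (2 * γ) := by
    have hterm : ∀ i : Fin d, |X t s i * ⟪Y' s i, S r ψ - ψ⟫|
        ≤ (CX * r ^ γ) * (MY * (K * r ^ (2 * γ))) := by
      intro i
      rw [abs_mul]
      apply mul_le_mul (bX i) _ (abs_nonneg _) (by positivity)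
      calc |⟪Y' s i, S r ψ - ψ⟫| ≤ ‖Y' s i‖ * ‖S r ψ - ψ‖ := abs_real_inner_le_norm _ _
        _ ≤ MY * (K * r ^ (2 * γ)) :=
            mul_le_mul (hY'b s i hs (le_trans hst htT)) hw (norm_nonneg _) hMY
    calc |∑ i, X t s i * ⟪Y' s i, S r ψ - ψ⟫|
        ≤ ∑ i : Fin d, |X t s i * ⟪Y' s i, S r ψ - ψ⟫| := Finset.abs_sum_le_sum_abs _ _
      _ ≤ ∑ _i : Fin d, (CX * r ^ γ) * (MY * (K * r ^ (2 * γ))) :=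
          Finset.sum_le_sum fun i _ => hterm i
      _ = d * ((CX * r ^ γ) * (MY * (K * r ^ (2 * γ)))) := by
          simp [Finset.sum_const, Finset.card_univ, nsmul_eq_mul]
      _ ≤ d * ((CX * T ^ γ) * (MY * (K * r ^ (2 * γ)))) := by
          have : r ^ γ ≤ T ^ γ := Real.rpow_le_rpow hr0 hrT hγ0.le
          have h1 : CX * r ^ γ ≤ CX * T ^ γ := mul_le_mul_of_nonneg_left this hCX
          apply mul_le_mul_of_nonneg_left _ (Nat.cast_nonneg d)
          exact mul_le_mul_of_nonneg_right h1 (by positivity)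
      _ = d * CX * T ^ γ * (MY * K) * r ^ (2 * γ) := by ring
  calc |φ _ + ⟪Y s, S r ψ - ψ⟫ + ∑ i, X t s i * ⟪Y' s i, S r ψ - ψ⟫|
      ≤ |φ _ + ⟪Y s, S r ψ - ψ⟫| + |∑ i, X t s i * ⟪Y' s i, S r ψ - ψ⟫| := abs_add_le _ _
    _ ≤ |φ _| + |⟪Y s, S r ψ - ψ⟫| + |∑ i, X t s i * ⟪Y' s i, S r ψ - ψ⟫| := by
        exact add_le_add (abs_add_le _ _) le_rfl
    _ ≤ ‖φ‖ * CR * r ^ (2 * γ) + MY * K * r ^ (2 * γ)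
        + d * CX * T ^ γ * (MY * K) * r ^ (2 * γ) := by
        exact add_le_add (add_le_add b1 b2) b3
    _ = (‖φ‖ * CR + MY * K + d * CX * T ^ γ * (MY * K)) * r ^ (2 * γ) := by ring
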